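/- arXiv:2212.14841 — 2 statements merged into one kernel-verified Lean document; each statement's English description precedes it below -/
import Mathlib

section
/- For every integer m ≥ 0 and real θ with sin θ ≠ 0, ∑_{j=0}^m (-1)^j C(m+j, 2j) (2 cos θ)^{2j} = T_{2m+1}(sin θ) / sin θ, where T_k is the Chebyshev polynomial of the first kind. -/
open Real Finset Polynomial

lemma choose_dd (n k : ℕ) :
    Nat.choose (n+2) (k+2) + Nat.choose n (k+2) = 2 * Nat.choose (n+1) (k+2) + Nat.choose n k := by
  have h4 := Nat.choose_succ_succ n (k+1)
  have h5 := Nat.choose_succ_succ (n+1) (k+1)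
  have h6 := Nat.choose_succ_succ n k
  simp only [Nat.succ_eq_add_one, Nat.add_assoc] at *
  norm_num at *
  omega

lemma sum_rec (x : ℝ) (m : ℕ) :
    (∑ j ∈ Finset.range (m+3), (-1:ℝ)^j * (Nat.choose (m+2+j) (2*j)) * x^(2*j))
    = (2 - x^2) * (∑ j ∈ Finset.range (m+2), (-1:ℝ)^j * (Nat.choose (m+1+j) (2*j)) * x^(2*j))
      - ∑ j ∈ Finset.range (m+1), (-1:ℝ)^j * (Nat.choose (m+j) (2*j)) * x^(2*j) := by
  set f : ℕ → ℝ := fun j => if j = 0 then 0 else (-1:ℝ)^(j-1) * (Nat.choose (m+j) (2*(j-1))) * x^(2*(j-1)+2) with hf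
  -- D : x^2 * S(m+1) = ∑ f over range (m+3)
  have hD : ∑ j ∈ Finset.range (m+3), f j
      = x^2 * ∑ j ∈ Finset.range (m+2), (-1:ℝ)^j * (Nat.choose (m+1+j) (2*j)) * x^(2*j) := by
    rw [Finset.sum_range_succ' f (m+2), Finset.mul_sum]
    simp only [hf]
    simp only [if_neg (Nat.succ_ne_zero _), if_pos rfl, Nat.add_sub_cancel, add_zero]
    simp only [if_true, add_zero]
    apply Finset.sum_congr rfl
    intro j _
    rw [show m+(j+1) = m+1+j from by omega]
    ring
  -- B : extend S(m+1)
  have hB : ∑ j ∈ Finset.range (m+3), (-1:ℝ)^j * (Nat.choose (m+1+j) (2*j)) * x^(2*j)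
      = ∑ j ∈ Finset.range (m+2), (-1:ℝ)^j * (Nat.choose (m+1+j) (2*j)) * x^(2*j) := by
    rw [Finset.sum_range_succ]
    have : Nat.choose (m+1+(m+2)) (2*(m+2)) = 0 := Nat.choose_eq_zero_of_lt (by omega)
    simp [this]
  -- C : extend S m
  have hC : ∑ j ∈ Finset.range (m+3), (-1:ℝ)^j * (Nat.choose (m+j) (2*j)) * x^(2*j)
      = ∑ j ∈ Finset.range (m+1), (-1:ℝ)^j * (Nat.choose (m+j) (2*j)) * x^(2*j) := by
    rw [Finset.sum_range_succ, Finset.sum_range_succ]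
    have h1 : Nat.choose (m+(m+2)) (2*(m+2)) = 0 := Nat.choose_eq_zero_of_lt (by omega)
    have h2 : Nat.choose (m+(m+1)) (2*(m+1)) = 0 := Nat.choose_eq_zero_of_lt (by omega)
    simp [h1, h2]
  -- termwise identity
  have hT : ∀ j ∈ Finset.range (m+3),
      (-1:ℝ)^j * (Nat.choose (m+2+j) (2*j)) * x^(2*j)
      + (-1:ℝ)^j * (Nat.choose (m+j) (2*j)) * x^(2*j)
      + f j
      = 2 * ((-1:ℝ)^j * (Nat.choose (m+1+j) (2*j)) * x^(2*j)) := by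
    intro j _
    match j with
    | 0 => simp [hf]; norm_num
    | k+1 =>
      simp only [hf, if_neg (Nat.succ_ne_zero k), Nat.add_sub_cancel]
      have hc := choose_dd (m+1+k) (2*k)
      have hcast : ((Nat.choose (m+1+k+2) (2*k+2) : ℕ) : ℝ) + (Nat.choose (m+1+k) (2*k+2) : ℕ)
          = 2 * (Nat.choose (m+1+k+1) (2*k+2) : ℕ) + (Nat.choose (m+1+k) (2*k) : ℕ) := by
        exact_mod_cast congrArg (Nat.cast : ℕ → ℝ) hc
      simp only [show m+2+(k+1) = m+1+k+2 from by omega, show 2*(k+1) = 2*k+2 from by omega,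
        show m+1+(k+1) = m+1+k+1 from by omega, show m+(k+1) = m+1+k from by omega]
      linear_combination ((-1:ℝ)^(k+1) * x^(2*k+2)) * hcast
  have hsum := Finset.sum_congr rfl hT
  rw [Finset.sum_add_distrib, Finset.sum_add_distrib, hC, hD, ← Finset.mul_sum, hB] at hsum
  linear_combination hsum

lemma cheb_rec (s : ℝ) (n : ℤ) :
    (Polynomial.Chebyshev.T ℝ (n+4)).eval s
      = (4*s^2-2) * (Polynomial.Chebyshev.T ℝ (n+2)).eval s
        - (Polynomial.Chebyshev.T ℝ n).eval s := by
  have h1 := Polynomial.Chebyshev.T_add_two ℝ (n+2)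
  have h2 := Polynomial.Chebyshev.T_add_two ℝ (n+1)
  have h3 := Polynomial.Chebyshev.T_add_two ℝ n
  have e1 : (Polynomial.Chebyshev.T ℝ (n+4)) = (4*X^2-2) * Polynomial.Chebyshev.T ℝ (n+2) - Polynomial.Chebyshev.T ℝ n := by
    have a : n + 2 + 2 = n + 4 := by ring
    rw [a] at h1
    have b : n + 1 + 2 = n + 3 := by ring
    rw [b] at h2
    have c : n + 1 + 1 = n + 2 := by ring
    rw [c] at h2
    have d : n + 2 + 1 = n + 3 := by ring
    rw [d] at h1
    linear_combination h1 + 2*X*h2 + h3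
  rw [e1]
  simp

lemma main_aux (θ : ℝ) (m : ℕ) :
    (∑ j ∈ Finset.range (m + 1), (-1 : ℝ) ^ j * (Nat.choose (m + j) (2 * j)) *
        (2 * Real.cos θ) ^ (2 * j)) * Real.sin θ
      = (Polynomial.Chebyshev.T ℝ (2 * m + 1)).eval (Real.sin θ) := by
  set s := Real.sin θ with hs
  have hcs : Real.cos θ ^ 2 = 1 - s ^ 2 := Real.cos_sq' θ
  suffices H : ∀ n : ℕ,
      (∑ j ∈ Finset.range (n + 1), (-1 : ℝ) ^ j * (Nat.choose (n + j) (2 * j)) *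
        (2 * Real.cos θ) ^ (2 * j)) * s
      = (Polynomial.Chebyshev.T ℝ (2 * n + 1)).eval s ∧
      (∑ j ∈ Finset.range (n + 2), (-1 : ℝ) ^ j * (Nat.choose (n + 1 + j) (2 * j)) *
        (2 * Real.cos θ) ^ (2 * j)) * s
      = (Polynomial.Chebyshev.T ℝ (2 * (n+1) + 1)).eval s by
    exact (H m).1
  intro n
  induction n with
  | zero =>
    constructor
    · norm_num [Polynomial.Chebyshev.T_one]
    · have h3 : (2 * ((0:ℕ)+1) + 1 : ℤ) = 3 := by norm_num
      rw [h3]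
      have hT3 : Polynomial.Chebyshev.T ℝ 3 = 2 * X * Polynomial.Chebyshev.T ℝ 2 - Polynomial.Chebyshev.T ℝ 1 := by
        have := Polynomial.Chebyshev.T_add_two ℝ 1
        norm_num at this
        rw [Polynomial.Chebyshev.T_one]
        exact this
      rw [hT3]
      simp [Finset.sum_range_succ, Polynomial.Chebyshev.T_one, Polynomial.Chebyshev.T_two]
      linear_combination (-4*s) * hcs
  | succ k ih =>
    refine ⟨ih.2, ?_⟩
    have hrec := sum_rec (2 * Real.cos θ) k
    have e1 : (∑ j ∈ Finset.range (k+3), (-1:ℝ)^j * (Nat.choose (k+2+j) (2*j)) * (2*Real.cos θ)^(2*j)) * s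
        = ((2 - (2*Real.cos θ)^2) * ((∑ j ∈ Finset.range (k+2), (-1:ℝ)^j * (Nat.choose (k+1+j) (2*j)) * (2*Real.cos θ)^(2*j)) * s)
          - (∑ j ∈ Finset.range (k+1), (-1:ℝ)^j * (Nat.choose (k+j) (2*j)) * (2*Real.cos θ)^(2*j)) * s) := by
      rw [hrec]; ring
    have hx : (2 - (2*Real.cos θ)^2) = 4*s^2 - 2 := by linear_combination (-4:ℝ) * hcs
    rw [hx, ih.1, ih.2] at e1
    have hcheb := cheb_rec s (2*(k:ℤ)+1)
    have i1 : (2*(k:ℤ)+1) + 2 = 2*((k:ℕ)+1:ℕ) + 1 := by push_cast; ring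
    have i2 : (2*(k:ℤ)+1) + 4 = 2*((k:ℕ)+1+1:ℕ) + 1 := by push_cast; ring
    rw [i1, i2] at hcheb
    have e2 : (∑ j ∈ Finset.range (k+1+2), (-1:ℝ)^j * (Nat.choose ((k+1)+1+j) (2*j)) * (2*Real.cos θ)^(2*j)) * s
        = (∑ j ∈ Finset.range (k+3), (-1:ℝ)^j * (Nat.choose (k+2+j) (2*j)) * (2*Real.cos θ)^(2*j)) * s := by
      norm_num
    rw [e2, e1]
    push_cast at hcheb ⊢
    ring_nf at hcheb ⊢
    linarith [hcheb]

theorem stmt_14 (m : ℕ) (θ : ℝ) (h : Real.sin θ ≠ 0) :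
    ∑ j ∈ Finset.range (m + 1), (-1 : ℝ) ^ j * (Nat.choose (m + j) (2 * j)) *
        (2 * Real.cos θ) ^ (2 * j)
      = (Polynomial.Chebyshev.T ℝ (2 * m + 1)).eval (Real.sin θ) / Real.sin θ := by
  rw [eq_div_iff h]
  exact main_aux θ m
end

section
/- For integers m ≥ 0 and n ≥ 1 and any real a, ∑_{j=0}^m (-4)^j C(m+j+1, 2j+1) ∑_{k=0}^{n-1} sin(a+2kπ/n) cos(a+2kπ/n)^{2j+1} = ((-1)^m / 2) ∑_{k=0}^{n-1} sin(2(m+1)(a + 2kπ/n)). -/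
open Real Finset

lemma chooseId (p q : ℕ) :
    (p+2).choose (q+2) + p.choose (q+2) = 2 * ((p+1).choose (q+2)) + p.choose q := by
  rw [Nat.choose_succ_succ (p+1) (q+1), Nat.choose_succ_succ p q,
    Nat.choose_succ_succ p (q+1)]
  simp only [Nat.succ_eq_add_one, show q+1+1 = q+2 from rfl]
  omega

theorem key : ∀ (m : ℕ) (x : ℝ),
    ∑ j ∈ Finset.range (m + 1), (-4 : ℝ) ^ j * (Nat.choose (m + j + 1) (2 * j + 1)) *
      (Real.sin x * Real.cos x ^ (2 * j + 1))
    = (-1 : ℝ) ^ m / 2 * Real.sin (2 * (m + 1) * x)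
  | 0, x => by
    simp [Real.sin_two_mul]
    ring
  | 1, x => by
    push_cast
    rw [show (2 : ℝ) * (1 + 1) * x = 2 * (2 * x) by ring]
    simp [Finset.sum_range_succ, Real.sin_two_mul, Real.cos_two_mul]
    ring
  | (m+2), x => by
    have h0 := key m x
    have h1 := key (m+1) x
    have hBe : (∑ j ∈ Finset.range (m+2+1), (-4:ℝ)^j * ((m+1+j+1).choose (2*j+1) : ℝ) *
          (Real.sin x * Real.cos x ^ (2*j+1)))
        = ∑ j ∈ Finset.range (m+1+1), (-4:ℝ)^j * ((m+1+j+1).choose (2*j+1) : ℝ) *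
          (Real.sin x * Real.cos x ^ (2*j+1)) := by
      rw [Finset.sum_range_succ _ (m+2),
        Nat.choose_eq_zero_of_lt (show m+1+(m+2)+1 < 2*(m+2)+1 by omega)]
      norm_num
    have hDe : (∑ j ∈ Finset.range (m+2+1), (-4:ℝ)^j * ((m+j+1).choose (2*j+1) : ℝ) *
          (Real.sin x * Real.cos x ^ (2*j+1)))
        = ∑ j ∈ Finset.range (m+1), (-4:ℝ)^j * ((m+j+1).choose (2*j+1) : ℝ) *
          (Real.sin x * Real.cos x ^ (2*j+1)) := by
      rw [Finset.sum_range_succ _ (m+2), Finset.sum_range_succ _ (m+1),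
        Nat.choose_eq_zero_of_lt (show m+(m+2)+1 < 2*(m+2)+1 by omega),
        Nat.choose_eq_zero_of_lt (show m+(m+1)+1 < 2*(m+1)+1 by omega)]
      norm_num
    have hsum : (∑ j ∈ Finset.range (m+2+1),
          ((-4:ℝ)^j * ((m+2+j+1).choose (2*j+1) : ℝ) * (Real.sin x * Real.cos x ^ (2*j+1))
           - 2 * ((-4:ℝ)^j * ((m+1+j+1).choose (2*j+1) : ℝ) * (Real.sin x * Real.cos x ^ (2*j+1)))
           + (-4:ℝ)^j * ((m+j+1).choose (2*j+1) : ℝ) * (Real.sin x * Real.cos x ^ (2*j+1))))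
        = ∑ j ∈ Finset.range (m+2+1),
          (-4 * Real.cos x ^ 2) *
            ((-4:ℝ)^j * ((m+1+j+1).choose (2*j+1) : ℝ) * (Real.sin x * Real.cos x ^ (2*j+1))) := by
      rw [Finset.sum_range_succ' _ (m+2), Finset.sum_range_succ _ (m+2),
        Nat.choose_eq_zero_of_lt (show m+1+(m+2)+1 < 2*(m+2)+1 by omega)]
      have t0 : ((-4:ℝ)^0 * ((m+2+0+1).choose (2*0+1) : ℝ) * (Real.sin x * Real.cos x ^ (2*0+1))
           - 2 * ((-4:ℝ)^0 * ((m+1+0+1).choose (2*0+1) : ℝ) * (Real.sin x * Real.cos x ^ (2*0+1)))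
           + (-4:ℝ)^0 * ((m+0+1).choose (2*0+1) : ℝ) * (Real.sin x * Real.cos x ^ (2*0+1))) = 0 := by
        simp [Nat.choose_one_right]
        push_cast
        ring
      rw [t0]
      simp only [Nat.cast_zero, mul_zero, zero_mul, add_zero]
      refine Finset.sum_congr rfl fun i hi => ?_
      rw [show m+2+(i+1)+1 = m+i+2+2 from by omega,
        show m+1+(i+1)+1 = m+i+2+1 from by omega,
        show m+(i+1)+1 = m+i+2 from by omega,
        show 2*(i+1)+1 = 2*i+1+2 from by omega,
        show m+1+i+1 = m+i+2 from by omega]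
      have hch : (((m+i+2+2).choose (2*i+1+2) : ℕ) : ℝ) + ((m+i+2).choose (2*i+1+2) : ℕ)
          = 2 * (((m+i+2+1).choose (2*i+1+2) : ℕ) : ℝ) + ((m+i+2).choose (2*i+1) : ℕ) := by
        exact_mod_cast chooseId (m+i+2) (2*i+1)
      linear_combination ((-4:ℝ)^(i+1) * (Real.sin x * Real.cos x ^ (2*i+1+2))) * hch
    have hS : (∑ j ∈ Finset.range (m+2+1), (-4:ℝ)^j * ((m+2+j+1).choose (2*j+1) : ℝ) *
          (Real.sin x * Real.cos x ^ (2*j+1)))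
        = (2 - 4*Real.cos x^2) * (∑ j ∈ Finset.range (m+1+1), (-4:ℝ)^j *
            ((m+1+j+1).choose (2*j+1) : ℝ) * (Real.sin x * Real.cos x ^ (2*j+1)))
          - ∑ j ∈ Finset.range (m+1), (-4:ℝ)^j * ((m+j+1).choose (2*j+1) : ℝ) *
            (Real.sin x * Real.cos x ^ (2*j+1)) := by
      rw [Finset.sum_add_distrib, Finset.sum_sub_distrib, ← Finset.mul_sum, ← Finset.mul_sum] at hsum
      linear_combination hsum + (2 - 4*Real.cos x^2) * hBe - hDe
    have trig : Real.sin (2*((m+2:ℕ)+1)*x)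
        = 2*(2*Real.cos x^2 - 1)*Real.sin (2*((m+1:ℕ)+1)*x) - Real.sin (2*((m:ℕ)+1)*x) := by
      push_cast
      rw [show (2:ℝ)*((m:ℝ)+2+1)*x = 2*((m:ℝ)+1+1)*x + 2*x by ring,
        show (2:ℝ)*((m:ℝ)+1)*x = 2*((m:ℝ)+1+1)*x - 2*x by ring,
        Real.sin_add, Real.sin_sub, Real.cos_two_mul, Real.sin_two_mul]
      ring
    rw [hS, h0, h1]
    linear_combination (-((-1:ℝ)^m)/2) * trig

theorem stmt_17 (m n : ℕ) (hn : 1 ≤ n) (a : ℝ) :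
    ∑ j ∈ Finset.range (m + 1), (-4 : ℝ) ^ j * (Nat.choose (m + j + 1) (2 * j + 1)) *
      ∑ k ∈ Finset.range n, Real.sin (a + 2 * k * π / n) * Real.cos (a + 2 * k * π / n) ^ (2 * j + 1)
    = (-1 : ℝ) ^ m / 2 * ∑ k ∈ Finset.range n, Real.sin (2 * (m + 1) * (a + 2 * k * π / n)) := by
  simp_rw [Finset.mul_sum]
  rw [Finset.sum_comm]
  exact Finset.sum_congr rfl fun k _ => key m (a + 2 * k * π / n)
end
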